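/- Let q ∈ L^1(0,1) and y(x,λ) the solution of −y'' + qy = λy, y(0,λ)=0, y'(0,λ)=1, with ẏ denoting ∂/∂λ. If λ_k is a Dirichlet eigenvalue (y(1,λ_k) = 0), then ‖y(·,λ_k)‖²_{L²(0,1)} = y'(1,λ_k) · ẏ(1,λ_k). -/

import Mathlib

open MeasureTheory intervalIntegral Set Filter Topology

/-- Gronwall inequality with L¹ coefficient, proved by a partition/contraction argument. -/
lemma gronwall_L1 (k : ℝ → ℝ) (hk : IntervalIntegrable k volume 0 1)
    (hk1 : ∀ t, 1 ≤ k t) :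
    ∃ C : ℝ, 0 ≤ C ∧ ∀ (B : ℝ → ℝ) (ε : ℝ), 0 ≤ ε →
      ContinuousOn B (Set.Icc 0 1) → (∀ x, 0 ≤ B x) →
      (∀ x ∈ Set.Icc (0:ℝ) 1, B x ≤ ε + ∫ t in (0:ℝ)..x, k t * B t) →
      ∀ x ∈ Set.Icc (0:ℝ) 1, B x ≤ C * ε := by
  have hk0 : ∀ t, (0:ℝ) ≤ k t := fun t => le_trans zero_le_one (hk1 t)
  set K : ℝ := ∫ t in (0:ℝ)..1, k t with hKdef
  have hsubIcc : ∀ a b : ℝ, a ∈ Icc (0:ℝ) 1 → b ∈ Icc (0:ℝ) 1 → uIcc a b ⊆ Icc 0 1 := by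
    intro a b ha hb
    simp only [Set.uIcc]
    exact Icc_subset_Icc (le_inf ha.1 hb.1) (sup_le ha.2 hb.2)
  have hksub : ∀ a b : ℝ, a ∈ Icc (0:ℝ) 1 → b ∈ Icc (0:ℝ) 1 →
      IntervalIntegrable k volume a b := by
    intro a b ha hb
    refine hk.mono_set ?_
    rw [uIcc_of_le (zero_le_one : (0:ℝ) ≤ 1)]
    exact hsubIcc a b ha hb
  have hG : ∀ a b : ℝ, a ∈ Icc (0:ℝ) 1 → b ∈ Icc (0:ℝ) 1 → a ≤ b →
      b - a ≤ ∫ t in a..b, k t := by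
    intro a b ha hb hab
    have h1 : ∫ t in a..b, (1:ℝ) ≤ ∫ t in a..b, k t :=
      integral_mono_on hab intervalIntegrable_const (hksub a b ha hb) (fun t _ => hk1 t)
    simpa using h1
  have hK1 : (1:ℝ) ≤ K := by
    have := hG 0 1 (by norm_num) (by norm_num) zero_le_one
    simpa using this
  set G : ℝ → ℝ := fun x => ∫ t in (0:ℝ)..x, k t with hGdef
  have hGcont : ContinuousOn G (Icc 0 1) := by
    have : IntegrableOn k (uIcc (0:ℝ) 1) volume := by
      rw [uIcc_of_le (zero_le_one : (0:ℝ) ≤ 1)]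
      exact (intervalIntegrable_iff_integrableOn_Icc_of_le zero_le_one).mp hk
    simpa [uIcc_of_le (zero_le_one : (0:ℝ) ≤ 1)] using continuousOn_primitive_interval this
  have hGsub : ∀ a b : ℝ, a ∈ Icc (0:ℝ) 1 → b ∈ Icc (0:ℝ) 1 →
      G b - G a = ∫ t in a..b, k t := by
    intro a b ha hb
    exact integral_interval_sub_left (hksub 0 b (by norm_num) hb) (hksub 0 a (by norm_num) ha)
  -- choose m with K/m ≤ 1/2
  set m : ℕ := ⌈2 * K⌉₊ with hmdef
  have hm2 : 2 * K ≤ m := Nat.le_ceil _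
  have hm0 : (0:ℝ) < m := lt_of_lt_of_le (by linarith) hm2
  -- partition points
  have hex : ∀ i : ℕ, ∃ q ∈ Icc (0:ℝ) 1, G q = ((min i m : ℕ) : ℝ) * K / m := by
    intro i
    have hmem : ((min i m : ℕ) : ℝ) * K / m ∈ Icc (G 0) (G 1) := by
      have h0 : G 0 = 0 := by simp [hGdef]
      have h1 : G 1 = K := rfl
      constructor
      · rw [h0]; positivity
      · rw [h1, div_le_iff₀ hm0]
        have h2 : ((min i m : ℕ) : ℝ) ≤ (m : ℝ) := by exact_mod_cast min_le_right i m
        nlinarith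
    obtain ⟨q, hq, hgq⟩ := intermediate_value_Icc (zero_le_one : (0:ℝ) ≤ 1) hGcont hmem
    exact ⟨q, hq, hgq⟩
  choose p hp hGp using hex
  have hmono : ∀ i : ℕ, p i ≤ p (i + 1) := by
    intro i
    by_contra h
    push_neg at h
    have h1 : G (p i) - G (p (i+1)) = ∫ t in (p (i+1))..(p i), k t :=
      hGsub _ _ (hp (i+1)) (hp i)
    have h2 : p i - p (i+1) ≤ ∫ t in (p (i+1))..(p i), k t :=
      hG _ _ (hp (i+1)) (hp i) h.le
    have h3 : G (p i) ≤ G (p (i+1)) := by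
      rw [hGp, hGp]
      rw [div_le_div_iff_of_pos_right hm0]
      have : ((min i m : ℕ) : ℝ) ≤ ((min (i+1) m : ℕ) : ℝ) := by
        exact_mod_cast min_le_min (Nat.le_succ i) le_rfl
      nlinarith
    linarith
  have hgap : ∀ i : ℕ, G (p (i+1)) - G (p i) ≤ 1/2 := by
    intro i
    rw [hGp, hGp]
    have h1 : ((min (i+1) m : ℕ) : ℝ) - ((min i m : ℕ) : ℝ) ≤ 1 := by
      have h0 : ((min (i+1) m : ℕ) : ℝ) ≤ ((min i m + 1 : ℕ) : ℝ) :=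
        (Nat.cast_le (α := ℝ)).mpr (show min (i+1) m ≤ min i m + 1 by omega)
      simp only [Nat.cast_add, Nat.cast_one] at h0
      linarith
    have hKm : K / m ≤ 1/2 := by rw [div_le_iff₀ hm0]; linarith
    have : ((min (i+1) m : ℕ) : ℝ) * K / m - ((min i m : ℕ) : ℝ) * K / m
        = (((min (i+1) m : ℕ) : ℝ) - ((min i m : ℕ) : ℝ)) * (K / m) := by ring
    rw [this]
    calc (((min (i+1) m : ℕ) : ℝ) - ((min i m : ℕ) : ℝ)) * (K / m)
        ≤ 1 * (K / m) := by
          apply mul_le_mul_of_nonneg_right h1; positivity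
      _ = K / m := one_mul _
      _ ≤ 1/2 := hKm
  have hGpK : ∀ i : ℕ, G (p i) ≤ K := by
    intro i
    rw [hGp, div_le_iff₀ hm0]
    have h2 : ((min i m : ℕ) : ℝ) ≤ (m : ℝ) := by exact_mod_cast min_le_right i m
    nlinarith
  have hplast : p m = 1 := by
    have h1 : G (p m) = K := by
      rw [hGp]; rw [min_self]; field_simp
    have h2 : 1 - p m ≤ ∫ t in (p m)..1, k t :=
      hG _ _ (hp m) ⟨zero_le_one, le_rfl⟩ (hp m).2
    have h3 : G 1 - G (p m) = ∫ t in (p m)..1, k t :=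
      hGsub _ _ (hp m) ⟨zero_le_one, le_rfl⟩
    have h4 : G 1 = K := rfl
    have : 1 - p m ≤ 0 := by rw [← h3, h4, h1] at h2; linarith
    linarith [(hp m).2]
  -- main claim
  refine ⟨(2*K+4)^m, by positivity, ?_⟩
  intro B ε hε hB hB0 hineq
  have hbase1 : (1:ℝ) ≤ 2*K+4 := by linarith
  have hkB : ∀ a b : ℝ, a ∈ Icc (0:ℝ) 1 → b ∈ Icc (0:ℝ) 1 →
      IntervalIntegrable (fun t => k t * B t) volume a b := by
    intro a b ha hb
    exact (hksub a b ha hb).mul_continuousOn (hB.mono (hsubIcc a b ha hb))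
  have main : ∀ i : ℕ, ∀ x ∈ Icc 0 (p i), B x ≤ (2*K+4)^i * ε := by
    intro i
    induction i with
    | zero =>
      intro x hx
      have hGp0 : G (p 0) = 0 := by rw [hGp]; simp
      have hp0 : p 0 ≤ 0 := by
        have h2 := hG 0 (p 0) ⟨le_rfl, zero_le_one⟩ (hp 0) (hp 0).1
        have h3 : G (p 0) - G 0 = ∫ t in (0:ℝ)..(p 0), k t :=
          hGsub _ _ ⟨le_rfl, zero_le_one⟩ (hp 0)
        have hG0 : G 0 = 0 := by simp [hGdef]
        rw [← h3, hGp0, hG0] at h2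
        linarith
      have hx0 : x = 0 := le_antisymm (hx.2.trans hp0) hx.1
      subst hx0
      have := hineq 0 ⟨le_rfl, zero_le_one⟩
      simpa using this
    | succ i ih =>
      have hsub1 : Icc (0:ℝ) (p (i+1)) ⊆ Icc (0:ℝ) 1 := Icc_subset_Icc le_rfl (hp (i+1)).2
      obtain ⟨z, hz, hzmax⟩ := isCompact_Icc.exists_isMaxOn
        (nonempty_Icc.mpr (hp (i+1)).1) (hB.mono hsub1)
      have hzle : ∀ x ∈ Icc (0:ℝ) (p (i+1)), B x ≤ B z := fun x hx => hzmax hx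
      suffices hBz : B z ≤ (2*K+4)^(i+1) * ε by
        intro x hx
        exact (hzle x hx).trans hBz
      have hpow1 : (1:ℝ) ≤ (2*K+4)^i := one_le_pow₀ hbase1
      rcases le_or_gt z (p i) with hcase | hcase
      · have h1 := ih z ⟨hz.1, hcase⟩
        have h2 : (2*K+4)^i * ε ≤ (2*K+4)^(i+1) * ε := by
          apply mul_le_mul_of_nonneg_right _ hε
          exact pow_le_pow_right₀ hbase1 (Nat.le_succ i)
        linarith
      · have hzmem : z ∈ Icc (0:ℝ) 1 := hsub1 hz
        have hpi : p i ∈ Icc (0:ℝ) 1 := hp i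
        have h1 : B z ≤ ε + ∫ t in (0:ℝ)..z, k t * B t := hineq z hzmem
        have hsplit : (∫ t in (0:ℝ)..z, k t * B t)
            = (∫ t in (0:ℝ)..(p i), k t * B t) + ∫ t in (p i)..z, k t * B t :=
          (integral_add_adjacent_intervals (hkB 0 (p i) ⟨le_rfl, zero_le_one⟩ hpi)
            (hkB (p i) z hpi hzmem)).symm
        have h2 : (∫ t in (0:ℝ)..(p i), k t * B t) ≤ (2*K+4)^i * ε * K := by
          have step1 : (∫ t in (0:ℝ)..(p i), k t * B t)
              ≤ ∫ t in (0:ℝ)..(p i), k t * ((2*K+4)^i * ε) := by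
            apply integral_mono_on hpi.1 (hkB 0 (p i) ⟨le_rfl, zero_le_one⟩ hpi)
              ((hksub 0 (p i) ⟨le_rfl, zero_le_one⟩ hpi).mul_const _)
            intro t ht
            exact mul_le_mul_of_nonneg_left (ih t ht) (hk0 t)
          have step2 : (∫ t in (0:ℝ)..(p i), k t * ((2*K+4)^i * ε))
              = G (p i) * ((2*K+4)^i * ε) := by
            rw [intervalIntegral.integral_mul_const]
          have step3 : G (p i) * ((2*K+4)^i * ε) ≤ K * ((2*K+4)^i * ε) := by
            apply mul_le_mul_of_nonneg_right (hGpK i); positivity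
          calc (∫ t in (0:ℝ)..(p i), k t * B t)
              ≤ G (p i) * ((2*K+4)^i * ε) := by rw [← step2]; exact step1
            _ ≤ K * ((2*K+4)^i * ε) := step3
            _ = (2*K+4)^i * ε * K := by ring
        have h3 : (∫ t in (p i)..z, k t * B t) ≤ (1/2) * B z := by
          have step1 : (∫ t in (p i)..z, k t * B t) ≤ ∫ t in (p i)..z, k t * B z := by
            apply integral_mono_on hcase.le (hkB (p i) z hpi hzmem)
              ((hksub (p i) z hpi hzmem).mul_const _)
            intro t ht
            exact mul_le_mul_of_nonneg_left
              (hzle t ⟨hpi.1.trans ht.1, ht.2.trans hz.2⟩) (hk0 t)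
          have step2 : (∫ t in (p i)..z, k t) = G z - G (p i) := (hGsub _ _ hpi hzmem).symm
          have step3 : G z ≤ G (p (i+1)) := by
            have h5 : G (p (i+1)) - G z = ∫ t in z..(p (i+1)), k t :=
              hGsub _ _ hzmem (hp (i+1))
            have h6 : p (i+1) - z ≤ ∫ t in z..(p (i+1)), k t :=
              hG _ _ hzmem (hp (i+1)) hz.2
            linarith [hz.2]
          have step4 : (∫ t in (p i)..z, k t) ≤ 1/2 := by
            rw [step2]
            have := hgap i
            linarith
          calc (∫ t in (p i)..z, k t * B t)
              ≤ ∫ t in (p i)..z, k t * B z := step1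
            _ = (∫ t in (p i)..z, k t) * B z := integral_mul_const _ _
            _ ≤ (1/2) * B z := mul_le_mul_of_nonneg_right step4 (hB0 z)
        have hcomb : B z ≤ ε + (2*K+4)^i * ε * K + (1/2) * B z := by
          rw [hsplit] at h1; linarith
        have : B z ≤ 2 * ε + 2 * K * ((2*K+4)^i * ε) := by linarith
        have hfin : 2 * ε + 2 * K * ((2*K+4)^i * ε) ≤ (2*K+4)^(i+1) * ε := by
          rw [pow_succ]
          nlinarith [mul_nonneg (sub_nonneg.mpr hpow1) hε, hK1, hε]
        linarith
  intro x hx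
  have := main m x ⟨hx.1, by rw [hplast]; exact hx.2⟩
  exact this

set_option linter.unusedVariables false in



/-- Sturm–Liouville norming-constant identity: if `y(·,λ)` solves
`−y'' + q y = λ y`, `y(0,λ)=0`, `y'(0,λ)=1`, `λ_k` is a Dirichlet eigenvalue
(`y(1,λ_k)=0`, real, with real eigenfunction), and `ẏ` denotes `∂/∂λ`, then
`‖y(·,λ_k)‖²_{L²(0,1)} = y'(1,λ_k) · ẏ(1,λ_k)`. -/
theorem stmt10
    (q : ℝ → ℝ) (hq : IntervalIntegrable q MeasureTheory.volume 0 1)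
    (y yd : ℂ → ℝ → ℂ)
    (hy' : ∀ lam : ℂ, ∀ x : ℝ, HasDerivAt (y lam) (yd lam x) x)
    (hy'' : ∀ lam : ℂ, ∀ x : ℝ,
      HasDerivAt (yd lam) (((q x : ℂ) - lam) * y lam x) x)
    (hy0 : ∀ lam : ℂ, y lam 0 = 0) (hyd0 : ∀ lam : ℂ, yd lam 0 = 1)
    (lamk : ℂ) (heig : y lamk 1 = 0)
    (hlamkreal : lamk.im = 0) (hyreal : ∀ x : ℝ, (y lamk x).im = 0)
    (ydot : ℂ) (hydot : HasDerivAt (fun lam : ℂ => y lam 1) ydot lamk) :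
    ((∫ x in (0:ℝ)..1, ‖y lamk x‖ ^ 2 : ℝ) : ℂ) = yd lamk 1 * ydot := by
  have hycont : ∀ lam : ℂ, Continuous (y lam) :=
    fun lam => Differentiable.continuous (fun x => (hy' lam x).differentiableAt)
  have hydcont : ∀ lam : ℂ, Continuous (yd lam) :=
    fun lam => Differentiable.continuous (fun x => (hy'' lam x).differentiableAt)
  -- Step A: Wronskian identity
  have key : ∀ lam : ℂ,
      y lam 1 * yd lamk 1 = (lam - lamk) * ∫ x in (0:ℝ)..1, y lam x * y lamk x := by
    intro lam
    have hW : ∀ x : ℝ, HasDerivAt (fun t => y lam t * yd lamk t - yd lam t * y lamk t)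
        ((lam - lamk) * (y lam x * y lamk x)) x := by
      intro x
      have h1 := ((hy' lam x).mul (hy'' lamk x)).sub ((hy'' lam x).mul (hy' lamk x))
      exact h1.congr_deriv (by ring)
    have hint : IntervalIntegrable (fun x => (lam - lamk) * (y lam x * y lamk x)) volume 0 1 :=
      (continuous_const.mul ((hycont lam).mul (hycont lamk))).intervalIntegrable 0 1
    have hftc := intervalIntegral.integral_eq_sub_of_hasDerivAt (fun x _ => hW x) hint
    rw [intervalIntegral.integral_const_mul] at hftc
    rw [hy0 lam, hy0 lamk, heig, hyd0 lam, hyd0 lamk] at hftc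
    simp only [mul_zero, zero_mul, sub_zero, mul_one, zero_sub, sub_neg_eq_add] at hftc
    exact hftc.symm
  -- Step B: Gronwall estimate
  set A : ℝ := ∫ x in (0:ℝ)..1, ‖y lamk x‖ with hAdef
  have hA0 : 0 ≤ A := by
    apply intervalIntegral.integral_nonneg zero_le_one
    intro t _; positivity
  set k0 : ℝ → ℝ := fun t => 1 + ‖q t‖ + (‖lamk‖ + 1) with hk0def
  have hk0int : IntervalIntegrable k0 volume 0 1 :=
    (intervalIntegrable_const.add hq.norm).add intervalIntegrable_const
  have hk01 : ∀ t, 1 ≤ k0 t := by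
    intro t
    have := norm_nonneg (q t)
    have := norm_nonneg lamk
    simp only [hk0def]
    linarith
  obtain ⟨C, hC0, hC⟩ := gronwall_L1 k0 hk0int hk01
  have hqC : IntervalIntegrable (fun t => (q t : ℂ)) volume 0 1 := ⟨hq.1.ofReal, hq.2.ofReal⟩
  have hsub01 : ∀ x : ℝ, x ∈ Icc (0:ℝ) 1 → uIcc (0:ℝ) x ⊆ uIcc (0:ℝ) 1 := by
    intro x hx
    rw [uIcc_of_le hx.1, uIcc_of_le zero_le_one]
    exact Icc_subset_Icc le_rfl hx.2
  have hbound : ∀ lam : ℂ, ‖lam - lamk‖ ≤ 1 → ∀ x ∈ Icc (0:ℝ) 1,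
      ‖y lam x - y lamk x‖ ≤ C * (‖lam - lamk‖ * A) := by
    intro lam hlam
    set w : ℝ → ℂ := fun x => y lam x - y lamk x with hwdef
    set v : ℝ → ℂ := fun x => yd lam x - yd lamk x with hvdef
    have hw' : ∀ x : ℝ, HasDerivAt w (v x) x := fun x => (hy' lam x).sub (hy' lamk x)
    set g : ℝ → ℂ := fun t => ((q t : ℂ) - lam) * w t + (lamk - lam) * y lamk t with hgdef
    have hv' : ∀ x : ℝ, HasDerivAt v (g x) x := by
      intro x
      have h1 := (hy'' lam x).sub (hy'' lamk x)
      exact h1.congr_deriv (by simp only [hgdef, hwdef]; ring)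
    have hwc : Continuous w := (hycont lam).sub (hycont lamk)
    have hvc : Continuous v := (hydcont lam).sub (hydcont lamk)
    have hgint : IntervalIntegrable g volume 0 1 := by
      apply IntervalIntegrable.add
      · exact (hqC.sub intervalIntegrable_const).mul_continuousOn hwc.continuousOn
      · exact (continuous_const.mul (hycont lamk)).intervalIntegrable 0 1
    have hweq : ∀ x ∈ Icc (0:ℝ) 1, w x = ∫ t in (0:ℝ)..x, v t := by
      intro x hx
      have h := intervalIntegral.integral_eq_sub_of_hasDerivAt (f := w)
        (fun t _ => hw' t) (hvc.intervalIntegrable 0 x)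
      rw [h]
      simp [hwdef, hy0]
    have hveq : ∀ x ∈ Icc (0:ℝ) 1, v x = ∫ t in (0:ℝ)..x, g t := by
      intro x hx
      have h := intervalIntegral.integral_eq_sub_of_hasDerivAt (f := v)
        (fun t _ => hv' t) (hgint.mono_set (hsub01 x hx))
      rw [h]
      simp [hvdef, hyd0]
    have hlamle : ‖lam‖ ≤ ‖lamk‖ + 1 := by
      calc ‖lam‖ = ‖lamk + (lam - lamk)‖ := by ring_nf
        _ ≤ ‖lamk‖ + ‖lam - lamk‖ := norm_add_le _ _
        _ ≤ ‖lamk‖ + 1 := by linarith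
    have hmain := hC (fun x => ‖w x‖ + ‖v x‖) (‖lam - lamk‖ * A)
      (by positivity)
      ((hwc.norm.add hvc.norm).continuousOn)
      (fun x => by positivity)
      ?_
    · intro x hx
      exact (le_add_of_nonneg_right (norm_nonneg (v x))).trans (hmain x hx)
    · -- the integral inequality
      intro x hx
      have h1 : ‖w x‖ ≤ ∫ t in (0:ℝ)..x, ‖v t‖ := by
        rw [hweq x hx]
        exact intervalIntegral.norm_integral_le_integral_norm hx.1
      have h2 : ‖v x‖ ≤ ∫ t in (0:ℝ)..x, ‖g t‖ := by
        rw [hveq x hx]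
        exact intervalIntegral.norm_integral_le_integral_norm hx.1
      have hvn : IntervalIntegrable (fun t => ‖v t‖) volume 0 x :=
        hvc.norm.intervalIntegrable 0 x
      have hgn : IntervalIntegrable (fun t => ‖g t‖) volume 0 x :=
        (hgint.mono_set (hsub01 x hx)).norm
      have hkB : IntervalIntegrable (fun t => k0 t * (‖w t‖ + ‖v t‖)) volume 0 x :=
        (hk0int.mono_set (hsub01 x hx)).mul_continuousOn
          ((hwc.norm.add hvc.norm).continuousOn)
      have hykn : IntervalIntegrable (fun t => ‖lam - lamk‖ * ‖y lamk t‖) volume 0 x :=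
        (continuous_const.mul (hycont lamk).norm).intervalIntegrable 0 x
      have hpt : ∀ t ∈ Icc (0:ℝ) x, ‖v t‖ + ‖g t‖
          ≤ k0 t * (‖w t‖ + ‖v t‖) + ‖lam - lamk‖ * ‖y lamk t‖ := by
        intro t ht
        have hg1 : ‖g t‖ ≤ (‖q t‖ + ‖lam‖) * ‖w t‖ + ‖lam - lamk‖ * ‖y lamk t‖ := by
          calc ‖g t‖ ≤ ‖((q t : ℂ) - lam) * w t‖ + ‖(lamk - lam) * y lamk t‖ :=
                norm_add_le _ _
            _ = ‖(q t : ℂ) - lam‖ * ‖w t‖ + ‖lamk - lam‖ * ‖y lamk t‖ := by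
                rw [norm_mul, norm_mul]
            _ ≤ (‖q t‖ + ‖lam‖) * ‖w t‖ + ‖lam - lamk‖ * ‖y lamk t‖ := by
                rw [norm_sub_rev lamk lam]
                have hq1 : ‖(q t : ℂ) - lam‖ ≤ ‖q t‖ + ‖lam‖ := by
                  have := norm_sub_le ((q t : ℂ)) lam
                  simpa [Complex.norm_real] using this
                exact add_le_add (mul_le_mul_of_nonneg_right hq1 (norm_nonneg _)) le_rfl
        have hk0t : ‖q t‖ + ‖lam‖ ≤ k0 t := by
          simp only [hk0def]; linarith
        have h1t : 1 ≤ k0 t := hk01 t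
        have hwn := norm_nonneg (w t)
        have hvn' := norm_nonneg (v t)
        nlinarith [mul_le_mul_of_nonneg_right hk0t hwn]
      calc ‖w x‖ + ‖v x‖
          ≤ (∫ t in (0:ℝ)..x, ‖v t‖) + ∫ t in (0:ℝ)..x, ‖g t‖ := add_le_add h1 h2
        _ = ∫ t in (0:ℝ)..x, (‖v t‖ + ‖g t‖) := (integral_add hvn hgn).symm
        _ ≤ ∫ t in (0:ℝ)..x, (k0 t * (‖w t‖ + ‖v t‖) + ‖lam - lamk‖ * ‖y lamk t‖) :=
            integral_mono_on hx.1 (hvn.add hgn) (hkB.add hykn) hpt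
        _ = (∫ t in (0:ℝ)..x, k0 t * (‖w t‖ + ‖v t‖))
              + ∫ t in (0:ℝ)..x, ‖lam - lamk‖ * ‖y lamk t‖ := integral_add hkB hykn
        _ ≤ ‖lam - lamk‖ * A + ∫ t in (0:ℝ)..x, k0 t * (‖w t‖ + ‖v t‖) := by
            have hA1 : (∫ t in (0:ℝ)..x, ‖lam - lamk‖ * ‖y lamk t‖)
                ≤ ‖lam - lamk‖ * A := by
              rw [intervalIntegral.integral_const_mul]
              apply mul_le_mul_of_nonneg_left _ (norm_nonneg _)
              rw [hAdef]
              apply intervalIntegral.integral_mono_interval le_rfl hx.1 hx.2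
              · exact Filter.Eventually.of_forall (fun t => norm_nonneg _)
              · exact ((hycont lamk).norm).intervalIntegrable 0 1
            linarith
  -- Step C: identify the limit
  set H : ℂ → ℂ := fun lam => ∫ x in (0:ℝ)..1, y lam x * y lamk x with hHdef
  have hHk : yd lamk 1 * ydot = H lamk := by
    have hslope : Tendsto (slope (fun l : ℂ => y l 1) lamk) (𝓝[≠] lamk) (𝓝 ydot) :=
      hasDerivAt_iff_tendsto_slope.mp hydot
    have h1 : Tendsto (fun lam => yd lamk 1 * slope (fun l : ℂ => y l 1) lamk lam)
        (𝓝[≠] lamk) (𝓝 (yd lamk 1 * ydot)) := tendsto_const_nhds.mul hslope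
    have h2 : ∀ᶠ lam in 𝓝[≠] lamk,
        yd lamk 1 * slope (fun l : ℂ => y l 1) lamk lam = H lam := by
      filter_upwards [self_mem_nhdsWithin] with lam hlam
      have hne : lam - lamk ≠ 0 := sub_ne_zero.mpr hlam
      rw [slope_def_field, heig, sub_zero]
      simp only [hHdef]
      field_simp
      linear_combination key lam
    have h3 : Tendsto H (𝓝[≠] lamk) (𝓝 (yd lamk 1 * ydot)) := h1.congr' h2
    have h4 : Tendsto H (𝓝[≠] lamk) (𝓝 (H lamk)) := by
      have hdiff : ∀ lam : ℂ, ‖lam - lamk‖ ≤ 1 →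
          ‖H lam - H lamk‖ ≤ (C * A * A) * ‖lam - lamk‖ := by
        intro lam hlam
        have hint1 : IntervalIntegrable (fun x => y lam x * y lamk x) volume 0 1 :=
          ((hycont lam).mul (hycont lamk)).intervalIntegrable 0 1
        have hint2 : IntervalIntegrable (fun x => y lamk x * y lamk x) volume 0 1 :=
          ((hycont lamk).mul (hycont lamk)).intervalIntegrable 0 1
        have hHsub : H lam - H lamk
            = ∫ x in (0:ℝ)..1, (y lam x - y lamk x) * y lamk x := by
          simp only [hHdef]
          rw [← integral_sub hint1 hint2]
          apply intervalIntegral.integral_congr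
          intro x _
          ring
        rw [hHsub]
        have hstep : ‖∫ x in (0:ℝ)..1, (y lam x - y lamk x) * y lamk x‖
            ≤ ∫ x in (0:ℝ)..1, ‖(y lam x - y lamk x) * y lamk x‖ :=
          intervalIntegral.norm_integral_le_integral_norm zero_le_one
        have hstep2 : (∫ x in (0:ℝ)..1, ‖(y lam x - y lamk x) * y lamk x‖)
            ≤ ∫ x in (0:ℝ)..1, (C * (‖lam - lamk‖ * A)) * ‖y lamk x‖ := by
          apply integral_mono_on zero_le_one
          · exact (((hycont lam).sub (hycont lamk)).mul (hycont lamk)).norm.intervalIntegrable 0 1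
          · exact (continuous_const.mul (hycont lamk).norm).intervalIntegrable 0 1
          · intro t ht
            rw [norm_mul]
            exact mul_le_mul_of_nonneg_right (hbound lam hlam t ht) (norm_nonneg _)
        have hstep3 : (∫ x in (0:ℝ)..1, (C * (‖lam - lamk‖ * A)) * ‖y lamk x‖)
            = (C * A * A) * ‖lam - lamk‖ := by
          rw [intervalIntegral.integral_const_mul, ← hAdef]
          ring
        linarith
      have h5 : Tendsto (fun lam : ℂ => (C * A * A) * ‖lam - lamk‖) (𝓝 lamk) (𝓝 0) := by
        have ht : Tendsto (fun lam : ℂ => lam - lamk) (𝓝 lamk) (𝓝 0) := by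
          have h : Tendsto (fun lam : ℂ => lam - lamk) (𝓝 lamk) (𝓝 (lamk - lamk)) :=
            (continuous_id.sub (continuous_const (y := lamk))).tendsto lamk
          simpa using h
        have := (ht.norm).const_mul (C * A * A)
        simpa using this
      have h6 : ∀ᶠ lam in 𝓝 lamk, ‖H lam - H lamk‖ ≤ (C * A * A) * ‖lam - lamk‖ := by
        have hball : ∀ᶠ lam in 𝓝 lamk, ‖lam - lamk‖ ≤ 1 := by
          filter_upwards [Metric.closedBall_mem_nhds lamk one_pos] with lam hl
          rwa [Metric.mem_closedBall, dist_eq_norm] at hl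
        filter_upwards [hball] with lam hl using hdiff lam hl
      have h7 : Tendsto (fun lam => H lam - H lamk) (𝓝 lamk) (𝓝 0) :=
        squeeze_zero_norm' h6 h5
      have h8 : Tendsto H (𝓝 lamk) (𝓝 (H lamk)) := by
        have := h7.add (tendsto_const_nhds (x := H lamk))
        simpa using this
      exact h8.mono_left nhdsWithin_le_nhds
    exact tendsto_nhds_unique h3 h4
  -- Step D: realness
  have hptreal : ∀ x : ℝ, y lamk x * y lamk x = ((‖y lamk x‖ ^ 2 : ℝ) : ℂ) := by
    intro x
    have hz := hyreal x
    have hzre : y lamk x = (((y lamk x).re : ℝ) : ℂ) := by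
      apply Complex.ext
      · simp
      · simp [hz]
    rw [hzre, Complex.norm_real, Real.norm_eq_abs, sq_abs]
    push_cast
    ring
  have hHfin : H lamk = ((∫ x in (0:ℝ)..1, ‖y lamk x‖ ^ 2 : ℝ) : ℂ) := by
    simp only [hHdef]
    have hcongr : (∫ x in (0:ℝ)..1, y lamk x * y lamk x)
        = ∫ x in (0:ℝ)..1, ((‖y lamk x‖ ^ 2 : ℝ) : ℂ) := by
      apply intervalIntegral.integral_congr
      intro x _
      exact hptreal x
    rw [hcongr, intervalIntegral.integral_ofReal]
  exact (hHk.trans hHfin).symm
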